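/- Every coefficient of the formal power series 1/((q;q^{12})_∞ (q^3;q^{12})_∞ (q^7;q^{12})_∞ (q^8;q^{12})_∞ (q^{11};q^{12})_∞) - 1/((q^3;q^{12})_∞ (q^4;q^{12})_∞ (q^5;q^{12})_∞ (q^7;q^{12})_∞ (q^{11};q^{12})_∞) is nonnegative. -/
import Mathlib

namespace KR13
open Multiset

/-! An explicit injection proving the Ehrenpreis-type inequality: partitions with parts
≡ 3,4,5,7,11 (mod 12) inject into partitions with parts ≡ 1,3,7,8,11 (mod 12).
Common classes 3,7,11 are kept; the 4-class and 5-class parts (data `α`, `β` of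
"quotients by 12", with `r`,`s` parts) are re-encoded into 1-class and 8-class parts,
where the number `v` of 8-class parts is chosen (depending on `r`,`s` through `vOf`)
so that the fiber position on `4r+5s = const` is recoverable from `v` mod 4/parity. -/

def vOf (r s : ℕ) : ℕ :=
  if s ≤ r then s
  else if s ≤ r + 5 then (if (r + s) % 2 = 0 then r + 1 else r)
  else r + (3 * r + s + 2) % 4

def uOf (r s : ℕ) : ℕ := 4 * r + 5 * s - 8 * vOf r s

def gam (α β : Multiset ℕ) : Multiset ℕ := if β.card ≤ α.card then α else β
def del (α β : Multiset ℕ) : Multiset ℕ := if β.card ≤ α.card then β else α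

def pad (m : Multiset ℕ) (k : ℕ) : Multiset ℕ := m + replicate (k - m.card) 0

def enc (C α β : Multiset ℕ) : Multiset ℕ :=
  C + (pad (gam α β) (uOf α.card β.card)).map (fun g => 12 * g + 1)
    + (pad (del α β) (vOf α.card β.card)).map (fun d => 12 * d + 8)

lemma cap_gam (r s : ℕ) : (if s ≤ r then r else s) + 8 * vOf r s ≤ 4 * r + 5 * s := by
  unfold vOf; split_ifs <;> omega

lemma cap_del (r s : ℕ) : (if s ≤ r then s else r) ≤ vOf r s := by
  unfold vOf; split_ifs <;> omega

lemma key_vOf (r₁ s₁ r₂ s₂ : ℕ) (hN : 4 * r₁ + 5 * s₁ = 4 * r₂ + 5 * s₂)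
    (hv : vOf r₁ s₁ = vOf r₂ s₂) : r₁ = r₂ ∧ s₁ = s₂ := by
  unfold vOf at hv; split_ifs at hv <;> omega

lemma card_gam (α β : Multiset ℕ) :
    (gam α β).card = if β.card ≤ α.card then α.card else β.card := by
  unfold gam; split_ifs <;> rfl

lemma card_del (α β : Multiset ℕ) :
    (del α β).card = if β.card ≤ α.card then β.card else α.card := by
  unfold del; split_ifs <;> rfl

lemma card_pad {m : Multiset ℕ} {k : ℕ} (h : m.card ≤ k) : (pad m k).card = k := by
  simp [pad, card_replicate]; omega

lemma sum_pad (m : Multiset ℕ) (k : ℕ) : (pad m k).sum = m.sum := by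
  simp [pad, sum_replicate]

lemma card_gam_le (α β : Multiset ℕ) : (gam α β).card ≤ uOf α.card β.card := by
  have h1 := cap_gam α.card β.card
  rw [card_gam]; unfold uOf; split_ifs at h1 ⊢ <;> omega

lemma card_del_le (α β : Multiset ℕ) : (del α β).card ≤ vOf α.card β.card := by
  have h2 := cap_del α.card β.card
  rw [card_del]; split_ifs at h2 ⊢ <;> omega

lemma uv_sum (r s : ℕ) : uOf r s + 8 * vOf r s = 4 * r + 5 * s := by
  have := cap_gam r s; unfold uOf; split_ifs at this <;> omega

lemma pad_inj {m₁ m₂ : Multiset ℕ} {k : ℕ} (hc : m₁.card = m₂.card)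
    (h : pad m₁ k = pad m₂ k) : m₁ = m₂ := by
  unfold pad at h
  rw [hc] at h
  exact add_right_cancel h

lemma enc_core_inj {α₁ β₁ α₂ β₂ : Multiset ℕ}
    (hG : pad (gam α₁ β₁) (uOf α₁.card β₁.card) = pad (gam α₂ β₂) (uOf α₂.card β₂.card))
    (hD : pad (del α₁ β₁) (vOf α₁.card β₁.card) = pad (del α₂ β₂) (vOf α₂.card β₂.card)) :
    α₁ = α₂ ∧ β₁ = β₂ := by
  have hu : uOf α₁.card β₁.card = uOf α₂.card β₂.card := by
    have := congrArg Multiset.card hG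
    rwa [card_pad (card_gam_le _ _), card_pad (card_gam_le _ _)] at this
  have hv : vOf α₁.card β₁.card = vOf α₂.card β₂.card := by
    have := congrArg Multiset.card hD
    rwa [card_pad (card_del_le _ _), card_pad (card_del_le _ _)] at this
  have hN : 4 * α₁.card + 5 * β₁.card = 4 * α₂.card + 5 * β₂.card := by
    have h1 := uv_sum α₁.card β₁.card
    have h2 := uv_sum α₂.card β₂.card
    omega
  obtain ⟨hr, hs⟩ := key_vOf _ _ _ _ hN hv
  have hcg : (gam α₁ β₁).card = (gam α₂ β₂).card := by
    rw [card_gam, card_gam, hr, hs]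
  have hcd : (del α₁ β₁).card = (del α₂ β₂).card := by
    rw [card_del, card_del, hr, hs]
  have hgam : gam α₁ β₁ = gam α₂ β₂ := pad_inj hcg (by rw [hG, hu])
  have hdel : del α₁ β₁ = del α₂ β₂ := pad_inj hcd (by rw [hD, hv])
  unfold gam at hgam
  unfold del at hdel
  rw [hr, hs] at hgam hdel
  split_ifs at hgam hdel <;> exact ⟨by assumption, by assumption⟩

section filters
variable (C α β : Multiset ℕ)

lemma filter_common_enc (hC : ∀ x ∈ C, x % 12 = 3 ∨ x % 12 = 7 ∨ x % 12 = 11) :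
    (enc C α β).filter (fun i => i % 12 = 3 ∨ i % 12 = 7 ∨ i % 12 = 11) = C := by
  unfold enc
  rw [filter_add, filter_add, filter_eq_self.2 hC, filter_eq_nil.2, filter_eq_nil.2]
  · simp
  · intro x hx
    obtain ⟨d, _, rfl⟩ := mem_map.1 hx
    omega
  · intro x hx
    obtain ⟨g, _, rfl⟩ := mem_map.1 hx
    omega

lemma filter_one_enc (hC : ∀ x ∈ C, x % 12 = 3 ∨ x % 12 = 7 ∨ x % 12 = 11) :
    (enc C α β).filter (fun i => i % 12 = 1)
      = (pad (gam α β) (uOf α.card β.card)).map (fun g => 12 * g + 1) := by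
  unfold enc
  rw [filter_add, filter_add, filter_eq_nil.2, filter_eq_self.2, filter_eq_nil.2]
  · simp
  · intro x hx
    obtain ⟨d, _, rfl⟩ := mem_map.1 hx
    omega
  · intro x hx
    obtain ⟨g, _, rfl⟩ := mem_map.1 hx
    omega
  · intro x hx
    have := hC x hx
    omega

lemma filter_eight_enc (hC : ∀ x ∈ C, x % 12 = 3 ∨ x % 12 = 7 ∨ x % 12 = 11) :
    (enc C α β).filter (fun i => i % 12 = 8)
      = (pad (del α β) (vOf α.card β.card)).map (fun d => 12 * d + 8) := by
  unfold enc
  rw [filter_add, filter_add, filter_eq_nil.2, filter_eq_nil.2, filter_eq_self.2]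
  · simp
  · intro x hx
    obtain ⟨d, _, rfl⟩ := mem_map.1 hx
    omega
  · intro x hx
    obtain ⟨g, _, rfl⟩ := mem_map.1 hx
    omega
  · intro x hx
    have := hC x hx
    omega

end filters

lemma enc_inj {C₁ α₁ β₁ C₂ α₂ β₂ : Multiset ℕ}
    (hC₁ : ∀ x ∈ C₁, x % 12 = 3 ∨ x % 12 = 7 ∨ x % 12 = 11)
    (hC₂ : ∀ x ∈ C₂, x % 12 = 3 ∨ x % 12 = 7 ∨ x % 12 = 11)
    (h : enc C₁ α₁ β₁ = enc C₂ α₂ β₂) :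
    C₁ = C₂ ∧ α₁ = α₂ ∧ β₁ = β₂ := by
  have hCC : C₁ = C₂ := by
    rw [← filter_common_enc C₁ α₁ β₁ hC₁, ← filter_common_enc C₂ α₂ β₂ hC₂, h]
  have hone : ((pad (gam α₁ β₁) (uOf α₁.card β₁.card)).map (fun g => 12 * g + 1) : Multiset ℕ)
      = (pad (gam α₂ β₂) (uOf α₂.card β₂.card)).map (fun g => 12 * g + 1) := by
    rw [← filter_one_enc C₁ α₁ β₁ hC₁, ← filter_one_enc C₂ α₂ β₂ hC₂, h]
  have height : ((pad (del α₁ β₁) (vOf α₁.card β₁.card)).map (fun d => 12 * d + 8) : Multiset ℕ)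
      = (pad (del α₂ β₂) (vOf α₂.card β₂.card)).map (fun d => 12 * d + 8) := by
    rw [← filter_eight_enc C₁ α₁ β₁ hC₁, ← filter_eight_enc C₂ α₂ β₂ hC₂, h]
  have hinj1 : Function.Injective (fun g : ℕ => 12 * g + 1) := fun a b hab => by
    have : 12 * a + 1 = 12 * b + 1 := hab
    omega
  have hinj8 : Function.Injective (fun d : ℕ => 12 * d + 8) := fun a b hab => by
    have : 12 * a + 8 = 12 * b + 8 := hab
    omega
  obtain ⟨hA, hB⟩ := enc_core_inj (Multiset.map_injective hinj1 hone)
    (Multiset.map_injective hinj8 height)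
  exact ⟨hCC, hA, hB⟩

lemma split_P (P : Multiset ℕ)
    (HB : ∀ i ∈ P, i % 12 = 3 ∨ i % 12 = 4 ∨ i % 12 = 5 ∨ i % 12 = 7 ∨ i % 12 = 11) :
    P.filter (fun i => i % 12 = 3 ∨ i % 12 = 7 ∨ i % 12 = 11)
      + P.filter (fun i => i % 12 = 4) + P.filter (fun i => i % 12 = 5) = P := by
  ext a
  rw [count_add, count_add, count_filter, count_filter, count_filter]
  by_cases ha : a ∈ P
  · have := HB a ha
    split_ifs <;> omega
  · have h0 : count a P = 0 := count_eq_zero.2 ha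
    split_ifs <;> omega

lemma recover_map (P : Multiset ℕ) (k : ℕ) :
    ((P.filter (fun i => i % 12 = k)).map (fun x => x / 12)).map (fun a => 12 * a + k)
      = P.filter (fun i => i % 12 = k) := by
  rw [map_map]
  have : ∀ x ∈ P.filter (fun i => i % 12 = k),
      ((fun a => 12 * a + k) ∘ (fun x => x / 12)) x = id x := by
    intro x hx
    have := (mem_filter.1 hx).2
    simp only [Function.comp_apply, id_eq]
    omega
  rw [map_congr rfl this, map_id]

lemma sum_map_aff (c k : ℕ) (m : Multiset ℕ) :
    (m.map (fun g => c * g + k)).sum = c * m.sum + k * m.card := by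
  induction m using Multiset.induction with
  | empty => simp
  | cons a s ih => simp [ih]; ring

lemma sum_gam_del (α β : Multiset ℕ) : (gam α β).sum + (del α β).sum = α.sum + β.sum := by
  unfold gam
  unfold del
  split_ifs <;> omega

lemma card_gam_del (α β : Multiset ℕ) :
    4 * α.card + 5 * β.card = uOf α.card β.card + 8 * vOf α.card β.card :=
  (uv_sum _ _).symm

lemma enc_sum (C α β : Multiset ℕ) :
    (enc C α β).sum = C.sum + (4 * α.card + 5 * β.card) + 12 * (α.sum + β.sum) := by
  unfold enc
  rw [sum_add, sum_add, sum_map_aff, sum_map_aff, sum_pad, sum_pad,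
    card_pad (card_gam_le _ _), card_pad (card_del_le _ _)]
  have h1 := uv_sum α.card β.card
  have h2 := sum_gam_del α β
  omega

lemma enc_mem (C α β : Multiset ℕ)
    (hC : ∀ x ∈ C, x % 12 = 3 ∨ x % 12 = 7 ∨ x % 12 = 11) :
    ∀ x ∈ enc C α β,
      x % 12 = 1 ∨ x % 12 = 3 ∨ x % 12 = 7 ∨ x % 12 = 8 ∨ x % 12 = 11 := by
  intro x hx
  unfold enc at hx
  rcases mem_add.1 hx with hx | hx
  · rcases mem_add.1 hx with hx | hx
    · have := hC x hx; omega
    · obtain ⟨g, _, rfl⟩ := mem_map.1 hx; omega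
  · obtain ⟨d, _, rfl⟩ := mem_map.1 hx; omega

lemma enc_pos (C α β : Multiset ℕ) (hC : ∀ x ∈ C, 0 < x) :
    ∀ x ∈ enc C α β, 0 < x := by
  intro x hx
  unfold enc at hx
  rcases mem_add.1 hx with hx | hx
  · rcases mem_add.1 hx with hx | hx
    · exact hC x hx
    · obtain ⟨g, _, rfl⟩ := mem_map.1 hx; omega
  · obtain ⟨d, _, rfl⟩ := mem_map.1 hx; omega

/-- The injection on partitions. -/
def Phi (n : ℕ)
    (p : {p : n.Partition //
      ∀ i ∈ p.parts, i % 12 = 3 ∨ i % 12 = 4 ∨ i % 12 = 5 ∨ i % 12 = 7 ∨ i % 12 = 11}) :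
    {p : n.Partition //
      ∀ i ∈ p.parts, i % 12 = 1 ∨ i % 12 = 3 ∨ i % 12 = 7 ∨ i % 12 = 8 ∨ i % 12 = 11} := by
  refine ⟨⟨enc (p.1.parts.filter (fun i => i % 12 = 3 ∨ i % 12 = 7 ∨ i % 12 = 11))
      ((p.1.parts.filter (fun i => i % 12 = 4)).map (fun x => x / 12))
      ((p.1.parts.filter (fun i => i % 12 = 5)).map (fun x => x / 12)), ?_, ?_⟩, ?_⟩
  · intro i hi
    exact enc_pos _ _ _ (fun x hx => p.1.parts_pos (mem_of_mem_filter hx)) i hi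
  · rw [enc_sum]
    have hsplit := split_P p.1.parts p.2
    have h4 : ((p.1.parts.filter (fun i => i % 12 = 4)).map (fun x => x / 12)).map
        (fun a => 12 * a + 4) = p.1.parts.filter (fun i => i % 12 = 4) := recover_map _ 4
    have h5 : ((p.1.parts.filter (fun i => i % 12 = 5)).map (fun x => x / 12)).map
        (fun a => 12 * a + 5) = p.1.parts.filter (fun i => i % 12 = 5) := recover_map _ 5
    have s4 := sum_map_aff 12 4 ((p.1.parts.filter (fun i => i % 12 = 4)).map (fun x => x / 12))
    have s5 := sum_map_aff 12 5 ((p.1.parts.filter (fun i => i % 12 = 5)).map (fun x => x / 12))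
    rw [h4] at s4
    rw [h5] at s5
    have hsum := congrArg Multiset.sum hsplit
    rw [sum_add, sum_add] at hsum
    have hn := p.1.parts_sum
    simp only [card_map] at s4 s5 ⊢
    omega
  · intro i hi
    exact enc_mem _ _ _ (fun x hx => (mem_filter.1 hx).2) i hi

lemma Phi_inj (n : ℕ) : Function.Injective (Phi n) := by
  intro p q h
  have hparts : (Phi n p).1.parts = (Phi n q).1.parts := by rw [h]
  have hPp : (Phi n p).1.parts = enc _ _ _ := rfl
  have hPq : (Phi n q).1.parts = enc _ _ _ := rfl
  rw [hPp, hPq] at hparts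
  obtain ⟨hC, hA, hB⟩ := enc_inj
    (fun x hx => (mem_filter.1 hx).2) (fun x hx => (mem_filter.1 hx).2) hparts
  apply Subtype.ext
  apply Nat.Partition.ext
  rw [← split_P p.1.parts p.2, ← split_P q.1.parts q.2]
  rw [← recover_map p.1.parts 4, ← recover_map q.1.parts 4,
    ← recover_map p.1.parts 5, ← recover_map q.1.parts 5]
  rw [hC, hA, hB]

end KR13

theorem stmt_13 (n : ℕ) :
    Nat.card {p : n.Partition //
        ∀ i ∈ p.parts, i % 12 = 1 ∨ i % 12 = 3 ∨ i % 12 = 7 ∨ i % 12 = 8 ∨ i % 12 = 11} ≥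
      Nat.card {p : n.Partition //
        ∀ i ∈ p.parts, i % 12 = 3 ∨ i % 12 = 4 ∨ i % 12 = 5 ∨ i % 12 = 7 ∨ i % 12 = 11} := by
  exact Nat.card_le_card_of_injective (KR13.Phi n) (KR13.Phi_inj n)
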